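/- (Reduction rule) Every closed upper set Z of Λ* satisfies: if yααz ∈ Z and yγz ∈ Z, where α < γ in Λ and y, z ∈ Λ*, then yαz ∈ Z. -/
import Mathlib


/-- The Higman ordering on words over an ordered alphabet `Λ`:
`x ≤ y` iff `y` has a subword that is letterwise above `x`. -/
def HigmanLE {Λ : Type*} [PartialOrder Λ] (x y : List Λ) : Prop :=
  List.SublistForall₂ (· ≤ ·) x y

/-- The strict Higman ordering. -/
def HigmanLT {Λ : Type*} [PartialOrder Λ] (x y : List Λ) : Prop :=
  HigmanLE x y ∧ ¬ HigmanLE y x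

/-- The upper cone `X^Δ` of a set of words. -/
def upperCone {Λ : Type*} [PartialOrder Λ] (X : Set (List Λ)) : Set (List Λ) :=
  {y | ∀ x ∈ X, HigmanLE x y}

/-- The lower cone `X^∇` of a set of words. -/
def lowerCone {Λ : Type*} [PartialOrder Λ] (X : Set (List Λ)) : Set (List Λ) :=
  {y | ∀ x ∈ X, HigmanLE y x}

/-- Elementwise concatenation `XY` of two sets of words. -/
def concatSet {Λ : Type*} (X Y : Set (List Λ)) : Set (List Λ) :=
  {w | ∃ x ∈ X, ∃ y ∈ Y, w = x ++ y}

/-- A (MacNeille) closed upper set of words: `Z = Z^{∇Δ}`. -/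
def ClosedUpper {Λ : Type*} [PartialOrder Λ] (Z : Set (List Λ)) : Prop :=
  Z = upperCone (lowerCone Z)

/-- A (MacNeille) closed lower set of words: `W = W^{Δ∇}`. -/
def ClosedLower {Λ : Type*} [PartialOrder Λ] (W : Set (List Λ)) : Prop :=
  W = lowerCone (upperCone W)

/-- An upper set of words with respect to the Higman ordering. -/
def IsUpperWordSet {Λ : Type*} [PartialOrder Λ] (Z : Set (List Λ)) : Prop :=
  ∀ x y : List Λ, HigmanLE x y → x ∈ Z → y ∈ Z

/-- A finitely generated lower set of words. -/
def FinGenLowerWords {Λ : Type*} [PartialOrder Λ] (S : Set (List Λ)) : Prop :=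
  ∃ F : Finset (List Λ), S = {x | ∃ w ∈ F, HigmanLE x w}

/-- A finitely generated lower set of letters. -/
def FinGenLowerLetters {Λ : Type*} [PartialOrder Λ] (S : Set Λ) : Prop :=
  ∃ F : Finset Λ, S = {x | ∃ w ∈ F, x ≤ w}

/-- Well-foundedness: no infinite strictly decreasing sequence. -/
def NoInfiniteDescent {Λ : Type*} [PartialOrder Λ] : Prop :=
  ¬ ∃ f : ℕ → Λ, ∀ n, f (n + 1) < f n

/-- Stability under the cancellation rule. -/
def StableCancel {Λ : Type*} [PartialOrder Λ] (Z : Set (List Λ)) : Prop :=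
  ∀ (y z : List Λ) (α β : Λ), (¬ ∃ c, c ≤ α ∧ c ≤ β) →
    y ++ α :: z ∈ Z → y ++ β :: z ∈ Z → y ++ z ∈ Z

/-- Stability under the reduction rule. -/
def StableReduce {Λ : Type*} [PartialOrder Λ] (Z : Set (List Λ)) : Prop :=
  ∀ (y z : List Λ) (α γ : Λ), α < γ →
    y ++ α :: α :: z ∈ Z → y ++ γ :: z ∈ Z → y ++ α :: z ∈ Z

/-- Stability under the permutation rule. -/
def StablePerm {Λ : Type*} [PartialOrder Λ] (Z : Set (List Λ)) : Prop :=
  ∀ (y z : List Λ) (α β γ : Λ), ¬ α ≤ β → ¬ β ≤ α → α < γ → β < γ →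
    y ++ α :: β :: z ∈ Z → y ++ γ :: z ∈ Z → y ++ β :: α :: z ∈ Z

/-- Stability under the meet rule. -/
def StableMeet {Λ : Type*} [PartialOrder Λ] (Z : Set (List Λ)) : Prop :=
  ∀ (y z : List Λ) (α β m : Λ), ¬ α ≤ β → ¬ β ≤ α →
    IsGLB ({α, β} : Set Λ) m →
    y ++ α :: z ∈ Z → y ++ β :: z ∈ Z → y ++ m :: z ∈ Z

/-- Stability under all four rules. -/
def StableAll {Λ : Type*} [PartialOrder Λ] (Z : Set (List Λ)) : Prop :=
  StableCancel Z ∧ StableReduce Z ∧ StablePerm Z ∧ StableMeet Z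

/-- `[Y]`: the smallest upper set containing `Y` that is stable under the four rules. -/
def stableClosure {Λ : Type*} [PartialOrder Λ] (Y : Set (List Λ)) : Set (List Λ) :=
  ⋂₀ {Z : Set (List Λ) | Y ⊆ Z ∧ IsUpperWordSet Z ∧ StableAll Z}

/-- reduction rule: every closed upper set `Z` of `Λ*` satisfies:
if `yααz ∈ Z` and `yγz ∈ Z` with `α < γ`, then `yαz ∈ Z`. -/
lemma higman_append_split {Λ : Type*} [PartialOrder Λ] {w y s : List Λ}
    (h : HigmanLE w (y ++ s)) :
    ∃ u v, w = u ++ v ∧ HigmanLE u y ∧ HigmanLE v s := by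
  rw [HigmanLE, List.sublistForall₂_iff] at h
  obtain ⟨l, hf, hsub⟩ := h
  rw [List.sublist_append_iff] at hsub
  obtain ⟨l₁, l₂, rfl, h₁, h₂⟩ := hsub
  refine ⟨w.take l₁.length, w.drop l₁.length, (List.take_append_drop _ _).symm, ?_, ?_⟩
  · exact List.sublistForall₂_iff.2 ⟨l₁, List.forall₂_take_append _ _ _ hf, h₁⟩
  · exact List.sublistForall₂_iff.2 ⟨l₂, List.forall₂_drop_append _ _ _ hf, h₂⟩

lemma higman_append {Λ : Type*} [PartialOrder Λ] {u v y s : List Λ}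
    (h₁ : HigmanLE u y) (h₂ : HigmanLE v s) : HigmanLE (u ++ v) (y ++ s) := by
  rw [HigmanLE, List.sublistForall₂_iff] at h₁ h₂ ⊢
  obtain ⟨l₁, hf₁, hs₁⟩ := h₁
  obtain ⟨l₂, hf₂, hs₂⟩ := h₂
  exact ⟨l₁ ++ l₂, List.rel_append hf₁ hf₂, hs₁.append hs₂⟩

lemma higman_trans {Λ : Type*} [PartialOrder Λ] {a b c : List Λ}
    (h₁ : HigmanLE a b) (h₂ : HigmanLE b c) : HigmanLE a c :=
  IsTrans.trans (r := List.SublistForall₂ ((· ≤ ·) : Λ → Λ → Prop)) a b c h₁ h₂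

lemma higman_of_sublist {Λ : Type*} [PartialOrder Λ] {a b : List Λ}
    (h : List.Sublist a b) : HigmanLE a b :=
  h.sublistForall₂

lemma higman_reduce_key {Λ : Type*} [PartialOrder Λ] {v z : List Λ} {α γ : Λ}
    (h₁ : HigmanLE v (α :: α :: z)) (h₂ : HigmanLE v (γ :: z)) :
    HigmanLE v (α :: z) := by
  cases h₁ with
  | nil => exact List.SublistForall₂.nil
  | cons hd ht =>
    cases h₂ with
    | cons hd' ht' => exact List.SublistForall₂.cons hd ht'
    | cons_right h' => exact List.SublistForall₂.cons_right h'
  | cons_right h' => exact h'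

theorem closedUpper_reduce {Λ : Type*} [PartialOrder Λ]
    (Z : Set (List Λ)) (hZ : ClosedUpper Z) : StableReduce Z := by
  intro y z α γ _ h₁ h₂
  rw [hZ]
  intro w hw
  have hw₁ : HigmanLE w (y ++ α :: α :: z) := hw _ h₁
  have hw₂ : HigmanLE w (y ++ γ :: z) := hw _ h₂
  obtain ⟨u₁, v₁, he₁, hu₁, hv₁⟩ := higman_append_split hw₁
  obtain ⟨u₂, v₂, he₂, hu₂, hv₂⟩ := higman_append_split hw₂
  rcases le_or_gt u₁.length u₂.length with hle | hle
  · -- v₂ is a suffix of v₁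
    have hsuf : List.Sublist v₂ v₁ := by
      have h1 : v₁ = w.drop u₁.length := by rw [he₁, List.drop_left]
      have h2 : v₂ = w.drop u₂.length := by rw [he₂, List.drop_left]
      have : w.drop u₂.length = (w.drop u₁.length).drop (u₂.length - u₁.length) := by
        rw [List.drop_drop]; congr 1; omega
      rw [h1, h2, this]
      exact (List.drop_sublist _ _)
    have hv₂' : HigmanLE v₂ (α :: α :: z) := higman_trans (higman_of_sublist hsuf) hv₁
    rw [he₂]
    exact higman_append hu₂ (higman_reduce_key hv₂' hv₂)
  · have hsuf : List.Sublist v₁ v₂ := by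
      have h1 : v₁ = w.drop u₁.length := by rw [he₁, List.drop_left]
      have h2 : v₂ = w.drop u₂.length := by rw [he₂, List.drop_left]
      have : w.drop u₁.length = (w.drop u₂.length).drop (u₁.length - u₂.length) := by
        rw [List.drop_drop]; congr 1; omega
      rw [h1, h2, this]
      exact (List.drop_sublist _ _)
    have hv₁' : HigmanLE v₁ (γ :: z) := higman_trans (higman_of_sublist hsuf) hv₂
    rw [he₁]
    exact higman_append hu₁ (higman_reduce_key hv₁ hv₁')
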